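/- Let M_1, M_2, … be pairwise disjoint infinite subsets of the positive integers and let N be the associated special copy in B(ℓ²). Then N contains no nonzero compact operator, and the quotient map onto the Calkin algebra is isometric on N; that is, dist(A, K) = ‖A‖ for every A ∈ N, where K is the set of compact operators on ℓ². -/

import Mathlib

open scoped ENNReal

noncomputable section

/-- The complex Hilbert space `ℓ²` of square-summable sequences indexed by the
positive integers. -/
abbrev H2 : Type := lp (fun _ : ℕ+ => ℂ) 2

/-- The standard orthonormal basis vectors of `ℓ²`. -/
def e (i : ℕ+) : H2 := lp.single 2 i 1

/-- The `(i,j)` matrix entry `⟨A e_j, e_i⟩` of a bounded operator on `ℓ²`. -/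
def entry (A : H2 →L[ℂ] H2) (i j : ℕ+) : ℂ := inner ℂ (e i) (A (e j))

/-- The special copy of `B(ℓ²)` associated to pairwise disjoint infinite subsets
`M_j = {m^j_1 < m^j_2 < ⋯}`, given via their strictly increasing enumerations
`ee j k = m^j_k`. -/
def specialCopy (ee : ℕ → ℕ → ℕ+) : Set (H2 →L[ℂ] H2) :=
  {A | (∀ i j : ℕ+, (¬ ∃ r s k : ℕ, i = ee r k ∧ j = ee s k) → entry A i j = 0) ∧
       (∀ r s k k' : ℕ, entry A (ee r k) (ee s k) = entry A (ee r k') (ee s k'))}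



lemma normsq (y : H2) : ‖y‖ ^ 2 = ∑' i, ‖y i‖ ^ 2 := by
  have h := lp.norm_rpow_eq_tsum (p := 2) (by norm_num) y
  have h2 : ((2 : ℝ≥0∞)).toReal = (2 : ℝ) := by norm_num
  rw [h2] at h
  rw [show (2:ℝ) = ((2:ℕ):ℝ) by norm_num] at h
  simp only [Real.rpow_natCast] at h
  exact_mod_cast h

lemma summable_sq (y : H2) : Summable (fun i => ‖y i‖ ^ 2) := by
  have h := (lp.memℓp y).summable (p := 2) (by norm_num)
  have h2 : ((2 : ℝ≥0∞)).toReal = (2 : ℝ) := by norm_num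
  rw [h2] at h
  rw [show (2:ℝ) = ((2:ℕ):ℝ) by norm_num] at h
  simp only [Real.rpow_natCast] at h
  exact_mod_cast h

lemma entry_apply (A : H2 →L[ℂ] H2) (i j : ℕ+) : (A (e j)) i = entry A i j := by
  simp only [entry, e]
  rw [lp.inner_single_left]
  simp [RCLike.inner_apply]

lemma e_apply (i j : ℕ+) : (e i) j = if j = i then 1 else 0 := by
  rw [e, lp.single_apply]
  split_ifs with h
  · subst h; simp
  · simp [Pi.single_apply, h]

section
variable {ee : ℕ → ℕ → ℕ+} (hmono : ∀ j, StrictMono (ee j))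
  (hdisj : ∀ j j', j ≠ j' → Set.range (ee j) ∩ Set.range (ee j') = ∅)

include hmono hdisj in
lemma ee_inj : ∀ {r k r' k'}, ee r k = ee r' k' → r = r' ∧ k = k' := by
  intro r k r' k' h
  by_cases hr : r = r'
  · subst hr
    exact ⟨rfl, (hmono r).injective h⟩
  · exfalso
    have : ee r k ∈ Set.range (ee r) ∩ Set.range (ee r') := ⟨⟨k, rfl⟩, ⟨k', h.symm ▸ rfl⟩⟩
    rw [hdisj r r' hr] at this
    exact this

end



section
variable {ee : ℕ → ℕ → ℕ+} (hmono : ∀ j, StrictMono (ee j))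
  (hdisj : ∀ j j', j ≠ j' → Set.range (ee j) ∩ Set.range (ee j') = ∅)

include hmono hdisj in
lemma shift_norm (y : ℕ → H2) (d : ℕ → ℕ → ℂ)
    (h0 : ∀ n i, (∀ r k, i ≠ ee r (k + n)) → y n i = 0)
    (h1 : ∀ n r k, (y n) (ee r (k + n)) = d r k) (n : ℕ) : ‖y n‖ = ‖y 0‖ := by
  classical
  have key : ∀ i : ℕ+, (y 0) i ≠ 0 → ∃ r k, i = ee r k := by
    intro i hi
    by_contra hc
    push_neg at hc
    exact hi (h0 0 i fun r k => hc r k)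
  have hsq : ‖y n‖ ^ 2 = ‖y 0‖ ^ 2 := by
    rw [normsq, normsq]
    have hg : ∀ x : Function.support (fun i : ℕ+ => ‖(y 0) i‖ ^ 2), (y 0) (x : ℕ+) ≠ 0 := by
      intro x
      have := x.2
      simp only [Function.mem_support] at this
      intro h
      exact this (by simp [h])
    refine tsum_eq_tsum_of_ne_zero_bij (f := fun i : ℕ+ => ‖(y n) i‖ ^ 2)
      (g := fun i : ℕ+ => ‖(y 0) i‖ ^ 2)
      (fun x => ee (key _ (hg x)).choose ((key _ (hg x)).choose_spec.choose + n)) ?_ ?_ ?_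
    · -- injective
      intro x x' hxx
      obtain ⟨hr, hk⟩ := ee_inj hmono hdisj hxx
      have e1 := (key _ (hg x)).choose_spec.choose_spec
      have e2 := (key _ (hg x')).choose_spec.choose_spec
      apply Subtype.ext
      rw [e1, e2]
      exact congrArg₂ ee hr (Nat.add_right_cancel hk)
    · -- support f ⊆ range
      intro j hj
      simp only [Function.mem_support] at hj
      have hyn : (y n) j ≠ 0 := fun h => hj (by simp [h])
      have : ∃ r k, j = ee r (k + n) := by
        by_contra hc
        push_neg at hc
        exact hyn (h0 n j fun r k => hc r k)
      obtain ⟨r, k, rfl⟩ := this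
      have hy0 : (y 0) (ee r k) ≠ 0 := by
        have h10 : (y 0) (ee r k) = d r k := h1 0 r k
        rw [h1 n r k] at hyn
        rw [h10]
        exact hyn
      have hmem : (ee r k) ∈ Function.support (fun i : ℕ+ => ‖(y 0) i‖ ^ 2) := by
        simp [Function.mem_support, hy0]
      refine ⟨⟨ee r k, hmem⟩, ?_⟩
      have e1 := (key _ (hg ⟨ee r k, hmem⟩)).choose_spec.choose_spec
      obtain ⟨hr, hk⟩ := ee_inj hmono hdisj e1
      exact congrArg₂ ee hr.symm (congrArg (· + n) hk.symm)
    · -- values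
      intro x
      have e1 := (key _ (hg x)).choose_spec.choose_spec
      simp only
      rw [h1 n _ _]
      have : (y 0) (x : ℕ+) = d (key _ (hg x)).choose (key _ (hg x)).choose_spec.choose := by
        conv_lhs => rw [e1]
        exact h1 0 _ _
      rw [this]
  calc ‖y n‖ = Real.sqrt (‖y n‖ ^ 2) := (Real.sqrt_sq (norm_nonneg _)).symm
    _ = Real.sqrt (‖y 0‖ ^ 2) := by rw [hsq]
    _ = ‖y 0‖ := Real.sqrt_sq (norm_nonneg _)


include hmono hdisj in
lemma shift_orth (y : ℕ → H2) (d : ℕ → ℕ → ℂ)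
    (h0 : ∀ n i, (∀ r k, i ≠ ee r (k + n)) → y n i = 0)
    (h1 : ∀ n r k, (y n) (ee r (k + n)) = d r k)
    (K : ℕ) (hK : ∀ r k, K < k → d r k = 0)
    (n n' : ℕ) (hnn : n + K < n') :
    ‖y n - y n'‖ ^ 2 = ‖y n‖ ^ 2 + ‖y n'‖ ^ 2 := by
  have hrep : ∀ m i, y m i ≠ 0 → ∃ r k, k ≤ K ∧ i = ee r (k + m) := by
    intro m i hi
    have : ∃ r k, i = ee r (k + m) := by
      by_contra hc
      push_neg at hc
      exact hi (h0 m i fun r k => hc r k)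
    obtain ⟨r, k, rfl⟩ := this
    refine ⟨r, k, ?_, rfl⟩
    by_contra hk'
    push_neg at hk'
    rw [h1 m r k, hK r k hk'] at hi
    exact hi rfl
  have hdisjoint : ∀ i : ℕ+, y n i = 0 ∨ y n' i = 0 := by
    intro i
    by_contra hc
    push_neg at hc
    obtain ⟨r, k, hkK, hi⟩ := hrep n i hc.1
    obtain ⟨r', k', hkK', hi'⟩ := hrep n' i hc.2
    rw [hi] at hi'
    obtain ⟨_, hkk⟩ := ee_inj hmono hdisj hi'
    omega
  rw [normsq, normsq, normsq]
  rw [← Summable.tsum_add (summable_sq (y n)) (summable_sq (y n'))]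
  apply tsum_congr
  intro i
  rw [lp.coeFn_sub, Pi.sub_apply]
  rcases hdisjoint i with h | h <;> rw [h] <;> simp


end

def xv (ee : ℕ → ℕ → ℕ+) (F : Finset (ℕ × ℕ)) (c : ℕ × ℕ → ℂ) (n : ℕ) : H2 :=
  ∑ p ∈ F, c p • e (ee p.1 (p.2 + n))

section
variable {ee : ℕ → ℕ → ℕ+} (hmono : ∀ j, StrictMono (ee j))
  (hdisj : ∀ j j', j ≠ j' → Set.range (ee j) ∩ Set.range (ee j') = ∅)

lemma xv_apply (F : Finset (ℕ × ℕ)) (c : ℕ × ℕ → ℂ) (n : ℕ) (i : ℕ+) :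
    (xv ee F c n) i = ∑ p ∈ F, c p * (if i = ee p.1 (p.2 + n) then 1 else 0) := by
  classical
  rw [xv, lp.coeFn_sum, Finset.sum_apply]
  apply Finset.sum_congr rfl
  intro p _
  rw [lp.coeFn_smul, Pi.smul_apply, e_apply]
  simp [smul_eq_mul]

lemma xv_smul (F : Finset (ℕ × ℕ)) (c : ℕ × ℕ → ℂ) (a : ℂ) (n : ℕ) :
    xv ee F (fun p => a * c p) n = a • xv ee F c n := by
  rw [xv, xv, Finset.smul_sum]
  apply Finset.sum_congr rfl
  intro p _
  rw [smul_smul]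

lemma xv_coord_zero (F : Finset (ℕ × ℕ)) (c : ℕ × ℕ → ℂ) (n : ℕ) (i : ℕ+)
    (h : ∀ r k, i ≠ ee r (k + n)) : (xv ee F c n) i = 0 := by
  rw [xv_apply]
  apply Finset.sum_eq_zero
  intro p _
  rw [if_neg (h p.1 p.2), mul_zero]

include hmono hdisj in
lemma xv_coord_shift (F : Finset (ℕ × ℕ)) (c : ℕ × ℕ → ℂ) (n r k : ℕ) :
    (xv ee F c n) (ee r (k + n)) = if (r, k) ∈ F then c (r, k) else 0 := by
  classical
  rw [xv_apply]
  rw [show (∑ p ∈ F, c p * (if ee r (k + n) = ee p.1 (p.2 + n) then 1 else 0)) =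
      ∑ p ∈ F, (if p = (r, k) then c p else 0) from ?_, Finset.sum_ite_eq' F (r, k) c]
  apply Finset.sum_congr rfl
  intro p _
  by_cases hp : p = (r, k)
  · subst hp
    simp
  · rw [if_neg hp, if_neg, mul_zero]
    intro hEq
    obtain ⟨h1, h2⟩ := ee_inj hmono hdisj hEq
    exact hp (Prod.ext h1.symm (by omega))

variable {A : H2 →L[ℂ] H2} (hA : A ∈ specialCopy ee)

include hmono hdisj hA in
lemma entryA1 {i : ℕ+} {s k : ℕ} (h : ∀ r, i ≠ ee r k) : entry A i (ee s k) = 0 := by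
  apply hA.1
  rintro ⟨r, s', k', hi, hj⟩
  obtain ⟨hs, hk⟩ := ee_inj hmono hdisj hj.symm
  exact h r (by rw [hi, hk])

include hmono hdisj hA in
lemma entryA2 {r k s k' : ℕ} (h : k ≠ k') : entry A (ee r k) (ee s k') = 0 := by
  apply hA.1
  rintro ⟨r', s', k'', hi, hj⟩
  obtain ⟨_, hk1⟩ := ee_inj hmono hdisj hi
  obtain ⟨_, hk2⟩ := ee_inj hmono hdisj hj
  omega

lemma Axv_apply (F : Finset (ℕ × ℕ)) (c : ℕ × ℕ → ℂ) (n : ℕ) (i : ℕ+) :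
    (A (xv ee F c n)) i = ∑ p ∈ F, c p * entry A i (ee p.1 (p.2 + n)) := by
  rw [xv, map_sum, lp.coeFn_sum, Finset.sum_apply]
  apply Finset.sum_congr rfl
  intro p _
  rw [map_smul, lp.coeFn_smul, Pi.smul_apply, entry_apply]
  simp [smul_eq_mul]

include hmono hdisj hA in
lemma Axv_coord_zero (F : Finset (ℕ × ℕ)) (c : ℕ × ℕ → ℂ) (n : ℕ) (i : ℕ+)
    (h : ∀ r k, i ≠ ee r (k + n)) : (A (xv ee F c n)) i = 0 := by
  rw [Axv_apply]
  apply Finset.sum_eq_zero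
  intro p _
  rw [entryA1 hmono hdisj hA (fun r => h r p.2), mul_zero]

include hmono hdisj hA in
lemma Axv_coord_shift (F : Finset (ℕ × ℕ)) (c : ℕ × ℕ → ℂ) (n r k : ℕ) :
    (A (xv ee F c n)) (ee r (k + n)) =
      ∑ p ∈ F, (if p.2 = k then c p * entry A (ee r 0) (ee p.1 0) else 0) := by
  classical
  rw [Axv_apply]
  apply Finset.sum_congr rfl
  intro p _
  by_cases hp : p.2 = k
  · rw [if_pos hp, hp]
    rw [hA.2 r p.1 (k + n) 0]
  · rw [if_neg hp, entryA2 hmono hdisj hA (fun hEq => hp (by omega)), mul_zero]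

end

set_option linter.unusedSectionVars false

lemma arith1 {a t v w sg dl p : ℝ} (hAt : 0 ≤ a - t) (h3 : v ≤ w + sg)
    (h2 : sg ≤ dl * w) (h1 : dl * (2 + a) ≤ t) (hdl : 0 < dl) (ht : 0 < t)
    (hw : 0 < w) (hge : (a - 2 * dl) * w ≤ p) : (a - t) * v ≤ p := by
  nlinarith [mul_le_mul_of_nonneg_left h3 hAt, mul_le_mul_of_nonneg_left h2 hAt,
    mul_le_mul_of_nonneg_right h1 hw.le, mul_pos hdl ht, mul_pos (mul_pos hdl ht) hw]

lemma single_eq_smul_e (i : ℕ+) (a : ℂ) : lp.single 2 i a = a • e i := by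
  rw [e, ← lp.single_smul]
  norm_num

lemma norm_sum_single_sq (f : ℕ+ → ℂ) (s : Finset ℕ+) :
    ‖∑ i ∈ s, lp.single 2 i (f i)‖ ^ 2 = ∑ i ∈ s, ‖f i‖ ^ 2 := by
  have h := lp.norm_sum_single (p := 2) (E := fun _ : ℕ+ => ℂ) (by norm_num) f s
  rw [show ((2 : ℝ≥0∞)).toReal = ((2:ℕ):ℝ) by norm_num] at h
  simp only [Real.rpow_natCast] at h
  exact_mod_cast h

section
variable {ee : ℕ → ℕ → ℕ+} (hmono : ∀ j, StrictMono (ee j))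
  (hdisj : ∀ j j', j ≠ j' → Set.range (ee j) ∩ Set.range (ee j') = ∅)
  {A : H2 →L[ℂ] H2} (hA : A ∈ specialCopy ee)

include hmono hdisj hA in
lemma Ae_zero {j : ℕ+} (h : ∀ s k, j ≠ ee s k) : A (e j) = 0 := by
  apply lp.ext
  funext i
  have : (A (e j)) i = entry A i j := entry_apply A i j
  rw [this, hA.1 i j ?_]
  · rfl
  · rintro ⟨r, s, k, _, hj⟩
    exact h s k hj

include hmono hdisj hA in
lemma approx (θ : ℝ) (hθ : 0 < θ) (hApos : 0 < ‖A‖) :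
    ∃ F c, ‖xv ee F c 0‖ = 1 ∧ ‖A‖ - θ ≤ ‖A (xv ee F c 0)‖ := by
  classical
  set δ : ℝ := min (θ / (2 + ‖A‖)) (‖A‖ / 3) with hδdef
  have hδpos : 0 < δ := lt_min (by positivity) (by positivity)
  have hδ1 : δ * (2 + ‖A‖) ≤ θ := by
    have : δ ≤ θ / (2 + ‖A‖) := min_le_left _ _
    rw [le_div_iff₀ (by positivity)] at this
    linarith
  have hδ2 : 3 * δ ≤ ‖A‖ := by
    have : δ ≤ ‖A‖ / 3 := min_le_right _ _
    linarith
  have hy : ∃ y : H2, (‖A‖ - δ) * ‖y‖ < ‖A y‖ := by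
    by_contra hc
    push_neg at hc
    have := A.opNorm_le_bound (by linarith) hc
    linarith
  obtain ⟨y, hy⟩ := hy
  have hynz : y ≠ 0 := by
    intro h
    simp only [h, map_zero, norm_zero, mul_zero] at hy
    exact lt_irrefl 0 hy
  have hypos : 0 < ‖y‖ := norm_pos_iff.mpr hynz
  set σ : ℝ := δ * ‖y‖ / (‖A‖ + 1) with hσdef
  have hσpos : 0 < σ := by positivity
  have hσ1 : ‖A‖ * σ ≤ δ * ‖y‖ := by
    rw [hσdef, mul_div_assoc', div_le_iff₀ (by positivity)]
    nlinarith [norm_nonneg A, mul_pos hδpos hypos]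
  have hσ2 : σ ≤ δ * ‖y‖ := by
    rw [hσdef, div_le_iff₀ (by positivity)]
    nlinarith [norm_nonneg A, mul_pos hδpos hypos]
  have hs := lp.hasSum_single (E := fun _ : ℕ+ => ℂ) (p := 2) (by norm_num) y
  rw [HasSum, SummationFilter.unconditional_filter, Metric.tendsto_atTop] at hs
  obtain ⟨t0, ht0⟩ := hs σ hσpos
  set z : H2 := ∑ i ∈ t0, lp.single 2 i (y i) with hzdef
  have hzy : ‖z - y‖ < σ := by
    have := ht0 t0 le_rfl
    rwa [dist_eq_norm] at this
  set eep : ℕ × ℕ → ℕ+ := fun p => ee p.1 p.2 with heepdef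
  have heepinj : Function.Injective eep := by
    intro p q h
    obtain ⟨h1, h2⟩ := ee_inj hmono hdisj h
    exact Prod.ext h1 h2
  set P : ℕ+ → Prop := fun i => ∃ p : ℕ × ℕ, eep p = i with hPdef
  set t' : Finset ℕ+ := t0.filter P with ht'def
  set F : Finset (ℕ × ℕ) := t'.image (Function.invFun eep) with hFdef
  set c : ℕ × ℕ → ℂ := fun p => y (eep p) with hcdef
  have hxvz : xv ee F c 0 = ∑ i ∈ t', lp.single 2 i (y i) := by
    rw [xv, hFdef]
    rw [Finset.sum_image (by
      intro i hi j hj hij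
      have hPi : P i := (Finset.mem_filter.mp hi).2
      have hPj : P j := (Finset.mem_filter.mp hj).2
      have e1 : eep (Function.invFun eep i) = i := Function.invFun_eq hPi
      have e2 : eep (Function.invFun eep j) = j := Function.invFun_eq hPj
      rw [← e1, ← e2, hij])]
    apply Finset.sum_congr rfl
    intro i hi
    have hPi : P i := (Finset.mem_filter.mp hi).2
    have e1 : eep (Function.invFun eep i) = i := Function.invFun_eq hPi
    have h2 : ee (Function.invFun eep i).1 ((Function.invFun eep i).2 + 0) = i := by
      rw [Nat.add_zero]
      exact e1
    rw [h2, single_eq_smul_e, hcdef]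
    simp only
    rw [e1]
  have hAz : A z = A (xv ee F c 0) := by
    rw [hzdef, hxvz, ht'def,
      ← Finset.sum_filter_add_sum_filter_not t0 P (fun i => lp.single 2 i (y i)), map_add]
    have hzero : A (∑ i ∈ t0.filter (fun i => ¬ P i), lp.single 2 i (y i)) = 0 := by
      rw [map_sum]
      apply Finset.sum_eq_zero
      intro i hi
      have hPi : ¬ P i := (Finset.mem_filter.mp hi).2
      rw [single_eq_smul_e, map_smul,
        Ae_zero hmono hdisj hA (fun s k h => hPi ⟨(s, k), h.symm⟩), smul_zero]
    rw [hzero, add_zero]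
  have hxvle : ‖xv ee F c 0‖ ≤ ‖z‖ := by
    apply le_of_pow_le_pow_left₀ two_ne_zero (norm_nonneg z)
    rw [hxvz, hzdef, norm_sum_single_sq, norm_sum_single_sq]
    apply Finset.sum_le_sum_of_subset_of_nonneg (Finset.filter_subset _ _)
    intro i _ _
    positivity
  have hzle : ‖z‖ ≤ ‖y‖ + σ := by
    have h1 := norm_add_le (z - y) y
    rw [sub_add_cancel] at h1
    linarith
  have hAxvge : (‖A‖ - 2 * δ) * ‖y‖ ≤ ‖A (xv ee F c 0)‖ := by
    have hsub : ‖A y - A z‖ ≤ ‖A‖ * ‖y - z‖ := by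
      rw [← map_sub]
      exact A.le_opNorm _
    have h2 : ‖y - z‖ ≤ σ := by
      rw [norm_sub_rev]
      linarith
    have h3 := norm_add_le (A y - A z) (A z)
    rw [sub_add_cancel] at h3
    have h4 : ‖A‖ * ‖y - z‖ ≤ ‖A‖ * σ := by
      apply mul_le_mul_of_nonneg_left h2 (norm_nonneg _)
    rw [hAz] at h3 hsub
    linarith
  have hApos2 : 0 < (‖A‖ - 2 * δ) * ‖y‖ := mul_pos (by linarith) hypos
  have hAxvpos : 0 < ‖A (xv ee F c 0)‖ := lt_of_lt_of_le hApos2 hAxvge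
  set ν : ℝ := ‖xv ee F c 0‖ with hνdef
  have hνpos : 0 < ν := by
    rcases (norm_nonneg (xv ee F c 0)).eq_or_lt with h | h
    · exfalso
      have h0 : xv ee F c 0 = 0 := norm_eq_zero.mp h.symm
      rw [h0, map_zero, norm_zero] at hAxvpos
      exact lt_irrefl 0 hAxvpos
    · exact h
  refine ⟨F, fun p => (ν⁻¹ : ℂ) * c p, ?_, ?_⟩
  · rw [xv_smul, norm_smul]
    simp only [norm_inv]
    rw [Complex.norm_real, Real.norm_eq_abs, abs_of_pos hνpos]
    field_simp
    exact hνdef.symm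
  · rw [xv_smul, map_smul, norm_smul]
    simp only [norm_inv]
    rw [Complex.norm_real, Real.norm_eq_abs, abs_of_pos hνpos]
    rcases le_or_gt ‖A‖ θ with hcase | hcase
    · calc ‖A‖ - θ ≤ 0 := by linarith
        _ ≤ _ := by positivity
    · have hAθ : (0:ℝ) ≤ ‖A‖ - θ := by linarith
      have hν3 : ν ≤ ‖y‖ + σ := le_trans hxvle hzle
      have hmain : (‖A‖ - θ) * ν ≤ ‖A (xv ee F c 0)‖ :=
        arith1 hAθ hν3 hσ2 hδ1 hδpos hθ hypos hAxvge
      have hcalc0 : ‖A‖ - θ = (‖A‖ - θ) * ν * ν⁻¹ := by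
        rw [mul_assoc, mul_inv_cancel₀ hνpos.ne', mul_one]
      calc ‖A‖ - θ = (‖A‖ - θ) * ν * ν⁻¹ := hcalc0
        _ ≤ ‖A (xv ee F c 0)‖ * ν⁻¹ := mul_le_mul_of_nonneg_right hmain (by positivity)
        _ = ν⁻¹ * ‖A (xv ee F c 0)‖ := mul_comm _ _

end

lemma compact_small (S : H2 →L[ℂ] H2) (hS : IsCompactOperator ⇑S) (x : ℕ → H2)
    (hx : ∀ n, ‖x n‖ ≤ 1) (η : ℝ) (hη : 0 < η) :
    ∃ m m' : ℕ, m < m' ∧ ‖S (x m) - S (x m')‖ < η := by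
  classical
  have hcpt : IsCompact (closure (⇑S '' Metric.closedBall 0 1)) :=
    IsCompactOperator.isCompact_closure_image_closedBall (𝕜₁ := ℂ)
      (f := (S : H2 →ₗ[ℂ] H2)) hS 1
  obtain ⟨t, htfin, hcover⟩ := (Metric.totallyBounded_iff).mp hcpt.totallyBounded (η/3)
    (by positivity)
  have hmem : ∀ n, S (x n) ∈ closure (⇑S '' Metric.closedBall 0 1) := fun n =>
    subset_closure ⟨x n, by simpa [Metric.mem_closedBall, dist_zero_right] using hx n, rfl⟩
  have hchoice : ∀ n : ℕ, ∃ yc, yc ∈ t ∧ S (x n) ∈ Metric.ball yc (η/3) := by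
    intro n
    have := hcover (hmem n)
    simpa using this
  choose g hg1 hg2 using hchoice
  haveI : Finite t := htfin.to_subtype
  obtain ⟨m, m', hne, heq⟩ :=
    Finite.exists_ne_map_eq_of_infinite (fun n : ℕ => (⟨g n, hg1 n⟩ : t))
  have hgg : g m = g m' := congrArg Subtype.val heq
  have hdist : dist (S (x m)) (S (x m')) < η := by
    have h1 := hg2 m
    have h2 := hg2 m'
    rw [Metric.mem_ball] at h1 h2
    calc dist (S (x m)) (S (x m')) ≤ dist (S (x m)) (g m) + dist (g m) (S (x m')) :=
          dist_triangle _ _ _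
      _ = dist (S (x m)) (g m) + dist (S (x m')) (g m') := by
            rw [hgg, dist_comm (g m') (S (x m'))]
      _ < η/3 + η/3 := add_lt_add h1 h2
      _ < η := by linarith
  rcases hne.lt_or_gt with h | h
  · exact ⟨m, m', h, by rwa [← dist_eq_norm]⟩
  · refine ⟨m', m, h, ?_⟩
    rw [norm_sub_rev, ← dist_eq_norm]
    exact hdist

section
variable {ee : ℕ → ℕ → ℕ+} (hmono : ∀ j, StrictMono (ee j))
  (hdisj : ∀ j j', j ≠ j' → Set.range (ee j) ∩ Set.range (ee j') = ∅)

include hmono hdisj in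
lemma key_ineq {A : H2 →L[ℂ] H2} (hA : A ∈ specialCopy ee) (S : H2 →L[ℂ] H2)
    (hS : IsCompactOperator ⇑S) : ‖A‖ ≤ ‖A - S‖ := by
  classical
  apply le_of_forall_sub_le
  intro ε hε
  rw [sub_le_iff_le_add, add_comm]
  rcases le_or_gt ‖A‖ ε with hcase | hcase
  · linarith [norm_nonneg (A - S)]
  have hApos : 0 < ‖A‖ := lt_trans hε hcase
  obtain ⟨F, c, hx1, hxA⟩ := approx hmono hdisj hA (ε/2) (by positivity) hApos
  set K : ℕ := F.sup Prod.snd with hKdef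
  have hFK : ∀ p ∈ F, p.2 ≤ K := fun p hp => Finset.le_sup (f := Prod.snd) hp
  have h0x : ∀ n i, (∀ r k, i ≠ ee r (k + n)) → (xv ee F c n) i = 0 :=
    fun n i h => xv_coord_zero F c n i h
  have h1x : ∀ n r k, (xv ee F c n) (ee r (k + n)) = (if (r, k) ∈ F then c (r, k) else 0) :=
    fun n r k => xv_coord_shift hmono hdisj F c n r k
  have hdx : ∀ r k, K < k → (if (r, k) ∈ F then c (r, k) else 0) = 0 := by
    intro r k hk
    rw [if_neg]
    intro hmem
    exact absurd (hFK _ hmem) (not_le.mpr hk)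
  have hnx : ∀ n, ‖xv ee F c n‖ = 1 := by
    intro n
    rw [shift_norm hmono hdisj (fun n => xv ee F c n) _ h0x h1x n]
    exact hx1
  obtain ⟨m, m', hmm, hSsmall⟩ := compact_small S hS (fun j => xv ee F c (j * (K + 1)))
    (fun j => le_of_eq (hnx _)) (ε/2) (by positivity)
  set n : ℕ := m * (K + 1) with hndef
  set n' : ℕ := m' * (K + 1) with hn'def
  have hKn : n + K < n' := by
    have h : (m + 1) * (K + 1) ≤ m' * (K + 1) :=
      Nat.mul_le_mul_right _ (Nat.succ_le_of_lt hmm)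
    have h2 : m * (K + 1) + (K + 1) ≤ m' * (K + 1) := by
      calc m * (K + 1) + (K + 1) = (m + 1) * (K + 1) := by ring
        _ ≤ _ := h
    rw [hndef, hn'def]
    linarith [h2]
  have hw2 : ‖xv ee F c n - xv ee F c n'‖ ^ 2 = 2 := by
    rw [shift_orth hmono hdisj (fun n => xv ee F c n) _ h0x h1x K hdx n n' hKn, hnx, hnx]
    norm_num
  have h0A : ∀ nn i, (∀ r k, i ≠ ee r (k + nn)) → (A (xv ee F c nn)) i = 0 :=
    fun nn i h => Axv_coord_zero hmono hdisj hA F c nn i h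
  have h1A : ∀ nn r k, (A (xv ee F c nn)) (ee r (k + nn)) =
      ∑ p ∈ F, (if p.2 = k then c p * entry A (ee r 0) (ee p.1 0) else 0) :=
    fun nn r k => Axv_coord_shift hmono hdisj hA F c nn r k
  have hdA : ∀ r k, K < k →
      (∑ p ∈ F, (if p.2 = k then c p * entry A (ee r 0) (ee p.1 0) else 0)) = 0 := by
    intro r k hk
    apply Finset.sum_eq_zero
    intro p hp
    rw [if_neg]
    intro h
    have := hFK p hp
    omega
  have hnA : ∀ nn, ‖A (xv ee F c nn)‖ = ‖A (xv ee F c 0)‖ :=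
    shift_norm hmono hdisj (fun nn => A (xv ee F c nn)) _ h0A h1A
  have hAw2 : ‖A (xv ee F c n) - A (xv ee F c n')‖ ^ 2 = 2 * ‖A (xv ee F c 0)‖ ^ 2 := by
    rw [shift_orth hmono hdisj (fun nn => A (xv ee F c nn)) _ h0A h1A K hdA n n' hKn,
      hnA n, hnA n']
    ring
  set w : H2 := xv ee F c n - xv ee F c n' with hwdef
  set q : ℝ := ‖A (xv ee F c 0)‖ with hqdef
  have hq : ‖A‖ - ε/2 ≤ q := hxA
  have hqpos : 0 ≤ q := norm_nonneg _
  have hwnorm : ‖w‖ = Real.sqrt 2 := by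
    rw [← Real.sqrt_sq (norm_nonneg w), hwdef, hw2]
  have hAwnorm : ‖A w‖ = Real.sqrt 2 * q := by
    rw [hwdef, map_sub, ← Real.sqrt_sq (norm_nonneg _), hAw2,
      Real.sqrt_mul (by norm_num : (0:ℝ) ≤ 2), hqdef, Real.sqrt_sq (norm_nonneg _)]
  have hSw : ‖S w‖ < ε/2 := by
    rw [hwdef, map_sub]
    exact hSsmall
  have hAwle : ‖A w‖ ≤ ‖(A - S) w‖ + ‖S w‖ := by
    have h := norm_add_le (A w - S w) (S w)
    rw [sub_add_cancel] at h
    rw [ContinuousLinearMap.sub_apply]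
    exact h
  have hops : ‖(A - S) w‖ ≤ ‖A - S‖ * ‖w‖ := (A - S).le_opNorm w
  have hs2pos : (0:ℝ) < Real.sqrt 2 := Real.sqrt_pos.mpr (by norm_num)
  have hs2ge1 : (1:ℝ) ≤ Real.sqrt 2 := by
    rw [show (1:ℝ) = Real.sqrt 1 by simp]
    exact Real.sqrt_le_sqrt (by norm_num)
  -- combine
  have hchain : Real.sqrt 2 * q ≤ ‖A - S‖ * Real.sqrt 2 + ε/2 := by
    rw [← hAwnorm, ← hwnorm]
    linarith
  have hABnonneg : 0 ≤ ‖A - S‖ := norm_nonneg _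
  nlinarith [mul_le_mul_of_nonneg_left hq hs2pos.le, mul_pos hs2pos hε,
    mul_le_mul_of_nonneg_right hs2ge1 hε.le]

end

/-- A special copy `N` in `B(ℓ²)` contains no nonzero compact operator, and the quotient
map onto the Calkin algebra is isometric on `N`: `dist(A, K) = ‖A‖` for every `A ∈ N`,
where `K` is the set of compact operators. -/
theorem stmt12 (ee : ℕ → ℕ → ℕ+) (hmono : ∀ j, StrictMono (ee j))
    (hdisj : ∀ j j', j ≠ j' → Set.range (ee j) ∩ Set.range (ee j') = ∅) :
    (∀ A ∈ specialCopy ee, IsCompactOperator ⇑A → A = 0) ∧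
    (∀ A ∈ specialCopy ee,
      Metric.infDist A {S : H2 →L[ℂ] H2 | IsCompactOperator ⇑S} = ‖A‖) := by
  have h0mem : (0 : H2 →L[ℂ] H2) ∈ {S : H2 →L[ℂ] H2 | IsCompactOperator ⇑S} := by
    simp only [Set.mem_setOf_eq, ContinuousLinearMap.coe_zero]
    exact isCompactOperator_zero
  have main : ∀ A ∈ specialCopy ee,
      Metric.infDist A {S : H2 →L[ℂ] H2 | IsCompactOperator ⇑S} = ‖A‖ := by
    intro A hA
    apply le_antisymm
    · have h := Metric.infDist_le_dist_of_mem (x := A) h0mem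
      rwa [dist_zero_right] at h
    · by_contra hlt
      push_neg at hlt
      obtain ⟨S, hSmem, hd⟩ := (Metric.infDist_lt_iff ⟨0, h0mem⟩).mp hlt
      have hk := key_ineq hmono hdisj hA S hSmem
      rw [dist_eq_norm] at hd
      linarith
  refine ⟨?_, main⟩
  intro A hA hcpt
  have h1 := main A hA
  have h2 : Metric.infDist A {S : H2 →L[ℂ] H2 | IsCompactOperator ⇑S} = 0 :=
    Metric.infDist_zero_of_mem hcpt
  have h3 : ‖A‖ = 0 := by rw [← h1, h2]
  exact norm_eq_zero.mp h3
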